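/- Let S be a finite set with n ≥ 1 elements, let c ≥ 1, and let w : S → ℝ_{>0} be a weight function. Then there exists a partition of S into c classes A₁, ..., A_c with w(A₁) ≥ w(A₂) ≥ ... ≥ w(A_c) such that for every index i and every v ∈ A_i, we have w(A_i) - w(v) ≤ w(A_c). -/

import Mathlib

theorem stmt12 {ι : Type*} [DecidableEq ι] (S : Finset ι) (hS : 1 ≤ S.card)
    (c : ℕ) (hc : 1 ≤ c) (w : ι → ℝ) (hw : ∀ i ∈ S, 0 < w i) :
    ∃ A : Fin c → Finset ι,
      (∀ i j, i ≠ j → Disjoint (A i) (A j)) ∧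
      Finset.univ.biUnion A = S ∧
      (∀ i j : Fin c, i ≤ j → ∑ v ∈ A j, w v ≤ ∑ v ∈ A i, w v) ∧
      (∀ i : Fin c, ∀ v ∈ A i,
        ∑ u ∈ A i, w u - w v ≤ ∑ u ∈ A ⟨c - 1, by omega⟩, w u) := by
  classical
  haveI : NeZero c := ⟨by omega⟩
  set Part : Finset (Fin c → Finset ι) :=
    (Fintype.piFinset fun _ : Fin c => S.powerset).filter
      (fun A => (∀ i j, i ≠ j → Disjoint (A i) (A j)) ∧ Finset.univ.biUnion A = S) with hPart
  have hmem : ∀ A : Fin c → Finset ι, A ∈ Part ↔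
      ((∀ i, A i ⊆ S) ∧ (∀ i j, i ≠ j → Disjoint (A i) (A j)) ∧
        Finset.univ.biUnion A = S) := by
    intro A
    simp [hPart, Fintype.mem_piFinset, Finset.mem_powerset, and_assoc]
  have hne : Part.Nonempty := by
    refine ⟨fun i => if i = 0 then S else ∅, (hmem _).2 ⟨?_, ?_, ?_⟩⟩
    · intro i; split <;> simp
    · intro i j hij
      by_cases hi : i = 0 <;> by_cases hj : j = 0 <;> simp_all
    · ext x
      simp only [Finset.mem_biUnion, Finset.mem_univ, true_and]
      constructor
      · rintro ⟨k, hk⟩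
        by_cases h : k = 0 <;> simp_all
      · intro hx; exact ⟨0, by simp [hx]⟩
  obtain ⟨A, hA, hminA⟩ :=
    Part.exists_min_image (fun A => ∑ k : Fin c, (∑ u ∈ A k, w u) ^ 2) hne
  obtain ⟨hsub, hdisj, hunion⟩ := (hmem A).1 hA
  -- key local optimality
  have hkey : ∀ i : Fin c, ∀ v ∈ A i, ∀ j : Fin c,
      (∑ u ∈ A i, w u) - w v ≤ ∑ u ∈ A j, w u := by
    intro i v hv j
    have hvS : v ∈ S := hsub i hv
    have hwv : 0 < w v := hw v hvS
    by_cases hij : j = i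
    · subst hij
      have h0 : 0 ≤ ∑ u ∈ (A j).erase v, w u :=
        Finset.sum_nonneg fun u hu => le_of_lt (hw u (hsub j (Finset.mem_of_mem_erase hu)))
      have he : ∑ u ∈ (A j).erase v, w u = ∑ u ∈ A j, w u - w v :=
        Finset.sum_erase_eq_sub hv
      linarith
    · -- move v from A i to A j
      have hvj : v ∉ A j := fun h =>
        Finset.disjoint_left.1 (hdisj j i hij) h hv
      set A' : Fin c → Finset ι :=
        Function.update (Function.update A i ((A i).erase v)) j (insert v (A j)) with hA'
      have hij' : i ≠ j := fun h => hij h.symm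
      have hA'i : A' i = (A i).erase v := by
        simp [hA', Function.update_apply, hij']
      have hA'j : A' j = insert v (A j) := by
        simp [hA', Function.update_apply]
      have hA'k : ∀ k : Fin c, k ≠ i → k ≠ j → A' k = A k := by
        intro k h1 h2
        simp [hA', Function.update_apply, h1, h2]
      have hsub' : ∀ k : Fin c, k ≠ j → A' k ⊆ A k := by
        intro k h2
        by_cases h1 : k = i
        · subst h1; rw [hA'i]; exact Finset.erase_subset _ _
        · rw [hA'k k h1 h2]
      have hA'mem : A' ∈ Part := by
        refine (hmem _).2 ⟨?_, ?_, ?_⟩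
        · intro k
          by_cases h1 : k = i
          · subst h1; rw [hA'i]
            exact (Finset.erase_subset _ _).trans (hsub k)
          by_cases h2 : k = j
          · subst h2; rw [hA'j]
            exact Finset.insert_subset hvS (hsub k)
          · rw [hA'k k h1 h2]; exact hsub k
        · intro k l hkl
          by_cases hk : k = j
          · subst hk
            rw [hA'j]
            have hvl : v ∉ A' l := by
              by_cases hli : l = i
              · subst hli; rw [hA'i]; exact Finset.notMem_erase v _
              · exact fun h =>
                  Finset.disjoint_left.1 (hdisj i l (Ne.symm hli)) hv (hsub' l hkl.symm h)
            exact Finset.disjoint_insert_left.2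
              ⟨hvl, ((hdisj k l hkl).mono_right (hsub' l hkl.symm))⟩
          by_cases hl : l = j
          · subst hl
            rw [hA'j]
            have hvk : v ∉ A' k := by
              by_cases hki : k = i
              · subst hki; rw [hA'i]; exact Finset.notMem_erase v _
              · exact fun h =>
                  Finset.disjoint_left.1 (hdisj i k (Ne.symm hki)) hv (hsub' k hk h)
            exact Finset.disjoint_insert_right.2
              ⟨hvk, ((hdisj k l hkl).mono_left (hsub' k hk))⟩
          · exact (hdisj k l hkl).mono (hsub' k hk) (hsub' l hl)
        · ext x
          simp only [Finset.mem_biUnion, Finset.mem_univ, true_and]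
          constructor
          · rintro ⟨k, hk⟩
            by_cases h2 : k = j
            · subst h2; rw [hA'j] at hk
              rcases Finset.mem_insert.1 hk with h | h
              · subst h; exact hvS
              · exact hsub k h
            · exact hsub k (hsub' k h2 hk)
          · intro hx
            obtain ⟨k, -, hk⟩ := Finset.mem_biUnion.1 (hunion ▸ hx)
            by_cases h1 : k = i
            · subst h1
              by_cases hxv : x = v
              · exact ⟨j, by rw [hA'j]; exact Finset.mem_insert.2 (Or.inl hxv)⟩
              · exact ⟨k, by rw [hA'i]; exact Finset.mem_erase.2 ⟨hxv, hk⟩⟩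
            by_cases h2 : k = j
            · subst h2
              exact ⟨k, by rw [hA'j]; exact Finset.mem_insert.2 (Or.inr hk)⟩
            · exact ⟨k, by rw [hA'k k h1 h2]; exact hk⟩
      have hΦ := hminA A' hA'mem
      have split : ∀ B : Fin c → Finset ι,
          ∑ k : Fin c, (∑ u ∈ B k, w u) ^ 2 =
          (∑ k ∈ (Finset.univ.erase j).erase i, (∑ u ∈ B k, w u) ^ 2
            + (∑ u ∈ B i, w u) ^ 2) + (∑ u ∈ B j, w u) ^ 2 := by
        intro B
        rw [Finset.sum_erase_add _ _ (Finset.mem_erase.2 ⟨hij', Finset.mem_univ i⟩),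
          Finset.sum_erase_add _ _ (Finset.mem_univ j)]
      rw [split A, split A'] at hΦ
      have hsame : ∑ k ∈ (Finset.univ.erase j).erase i, (∑ u ∈ A' k, w u) ^ 2
          = ∑ k ∈ (Finset.univ.erase j).erase i, (∑ u ∈ A k, w u) ^ 2 := by
        refine Finset.sum_congr rfl fun k hk => ?_
        obtain ⟨hki, hkj⟩ := Finset.mem_erase.1 hk
        rw [hA'k k hki (Finset.mem_erase.1 hkj).1]
      have hei : ∑ u ∈ A' i, w u = ∑ u ∈ A i, w u - w v := by
        rw [hA'i]; exact Finset.sum_erase_eq_sub hv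
      have hej : ∑ u ∈ A' j, w u = w v + ∑ u ∈ A j, w u := by
        rw [hA'j]; exact Finset.sum_insert hvj
      rw [hsame, hei, hej] at hΦ
      nlinarith [hΦ, hwv]
  -- sort the classes by nonincreasing weight
  set g : Fin c → ℝ := fun k => ∑ u ∈ A k, w u with hg
  set σ : Equiv.Perm (Fin c) := Tuple.sort g with hσ
  have hmono : Monotone (g ∘ σ) := Tuple.monotone_sort g
  refine ⟨fun k => A (σ k.rev), ?_, ?_, ?_, ?_⟩
  · intro i j hij
    exact hdisj _ _ (fun h => hij (Fin.rev_injective (σ.injective h)))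
  · ext x
    simp only [Finset.mem_biUnion, Finset.mem_univ, true_and]
    constructor
    · rintro ⟨k, hk⟩
      exact hunion ▸ Finset.mem_biUnion.2 ⟨σ k.rev, Finset.mem_univ _, hk⟩
    · intro hx
      obtain ⟨k, -, hk⟩ := Finset.mem_biUnion.1 (hunion ▸ hx)
      exact ⟨(σ.symm k).rev, by simpa using hk⟩
  · intro i j hle
    exact hmono (by simpa [Fin.rev_le_rev] using hle)
  · intro i v hv
    exact hkey _ v hv _
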